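/- Abstract version of the norm-to-relative-entropy bound: let Φ be a Young function on a Banach space V and suppose ω ∈ V* and x ∈ V satisfy Φ(y) ≥ cosh(ω(y))·e^{−S} − 1 for all y ∈ V, where S ≥ 0 is a constant. If ‖x‖_Φ = t > 0 then cosh(ω(x)/t) ≤ 2 e^{S}; consequently |ω(x)| ≤ t·arccosh(2e^{S}). -/

import Mathlib

open Filter Topology

/-- Inverse hyperbolic cosine (not yet in Mathlib). -/
noncomputable def Real.arcoshLog (y : ℝ) : ℝ := Real.log (y + Real.sqrt (y ^ 2 - 1))

lemma le_arcosh_of_cosh_le {u y : ℝ} (hu : 0 ≤ u) (h : Real.cosh u ≤ y) :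
    u ≤ Real.arcoshLog y := by
  have h1 : (1:ℝ) ≤ Real.cosh u := Real.one_le_cosh u
  have hy : (1:ℝ) ≤ y := h1.trans h
  have hsinh : Real.sinh u = Real.sqrt (Real.cosh u ^ 2 - 1) := by
    rw [show Real.cosh u ^ 2 - 1 = Real.sinh u ^ 2 by rw [Real.cosh_sq]; ring]
    rw [Real.sqrt_sq (Real.sinh_nonneg_iff.mpr hu)]
  have hsq : Real.cosh u ^ 2 - 1 ≤ y ^ 2 - 1 := by
    have := pow_le_pow_left₀ (by linarith) h 2
    linarith
  have hexp : Real.exp u ≤ y + Real.sqrt (y ^ 2 - 1) := by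
    rw [← Real.cosh_add_sinh, hsinh]
    exact add_le_add h (Real.sqrt_le_sqrt hsq)
  have := Real.log_le_log (Real.exp_pos u) hexp
  rwa [Real.log_exp] at this

/-- abstract norm-to-relative-entropy bound: if a Young function `Φ` on a
Banach space `V` dominates `y ↦ cosh(ω(y)) e^{−S} − 1` for a functional `ω` and a
constant `S ≥ 0`, and `x` has Luxemburg norm `t > 0`, then `cosh(ω(x)/t) ≤ 2 e^S` and
consequently `|ω(x)| ≤ t · arcosh(2 e^S)`. -/
theorem entropy_ball_equicontinuous
    {V : Type*} [NormedAddCommGroup V] [NormedSpace ℝ V] [CompleteSpace V]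
    (Φ : V → EReal)
    (hconv : ∀ x y : V, ∀ a b : ℝ, 0 ≤ a → 0 ≤ b → a + b = 1 →
      Φ (a • x + b • y) ≤ (a : EReal) * Φ x + (b : EReal) * Φ y)
    (hlsc : LowerSemicontinuous Φ)
    (hnonneg : ∀ x, 0 ≤ Φ x)
    (hzero : Φ 0 = 0)
    (heven : ∀ x, Φ (-x) = Φ x)
    (htop : ∀ x : V, x ≠ 0 → Tendsto (fun t : ℝ => Φ (t • x)) atTop (𝓝 (⊤ : EReal)))
    (ω : V →L[ℝ] ℝ) (S : ℝ) (hS : 0 ≤ S)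
    (hbound : ∀ y : V, ((Real.cosh (ω y) * Real.exp (-S) - 1 : ℝ) : EReal) ≤ Φ y)
    (x : V) (t : ℝ) (htpos : 0 < t)
    (ht : sInf {ρ : ℝ | 0 < ρ ∧ Φ (ρ⁻¹ • x) ≤ 1} = t) :
    Real.cosh (ω x / t) ≤ 2 * Real.exp S ∧
    |ω x| ≤ t * Real.arcoshLog (2 * Real.exp S) := by
  set s : Set ℝ := {ρ : ℝ | 0 < ρ ∧ Φ (ρ⁻¹ • x) ≤ 1} with hs
  have hne : s.Nonempty := by
    by_contra h
    rw [Set.not_nonempty_iff_eq_empty] at h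
    rw [h, Real.sInf_empty] at ht
    exact htpos.ne ht
  -- Step A : every ρ > t lies in s
  have hA : ∀ ρ : ℝ, t < ρ → Φ (ρ⁻¹ • x) ≤ 1 := by
    intro ρ hρ
    obtain ⟨ρ₀, hρ₀s, hρ₀⟩ := exists_lt_of_csInf_lt hne (ht.symm ▸ hρ)
    obtain ⟨hρ₀pos, hρ₀le⟩ := hρ₀s
    have hρpos : 0 < ρ := hρ₀pos.trans hρ₀
    set a : ℝ := ρ₀ / ρ with ha
    have hapos : 0 < a := div_pos hρ₀pos hρpos
    have hale : a ≤ 1 := (div_le_one hρpos).mpr hρ₀.le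
    have key := hconv (ρ₀⁻¹ • x) 0 a (1 - a) hapos.le (by linarith) (by ring)
    have heq : a • (ρ₀⁻¹ • x) + (1 - a) • (0 : V) = ρ⁻¹ • x := by
      rw [smul_zero, add_zero, smul_smul]
      congr 1
      field_simp
      rw [ha, div_mul_cancel₀ _ hρpos.ne']
    rw [heq, hzero, mul_zero, add_zero] at key
    -- extract real value of Φ (ρ₀⁻¹ • x)
    have hnb : Φ (ρ₀⁻¹ • x) ≠ ⊥ := ne_of_gt (lt_of_lt_of_le EReal.bot_lt_zero (hnonneg _))
    have hnt : Φ (ρ₀⁻¹ • x) ≠ ⊤ := ne_of_lt (lt_of_le_of_lt hρ₀le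
      (by rw [show (1:EReal) = ((1:ℝ):EReal) by simp]; exact EReal.coe_lt_top 1))
    set c : ℝ := (Φ (ρ₀⁻¹ • x)).toReal with hc
    have hceq : Φ (ρ₀⁻¹ • x) = (c : EReal) := (EReal.coe_toReal hnt hnb).symm
    have hc1 : c ≤ 1 := by
      have := hρ₀le
      rw [hceq, show (1 : EReal) = ((1:ℝ) : EReal) by simp] at this
      exact_mod_cast this
    have hc0 : 0 ≤ c := by
      have := hnonneg (ρ₀⁻¹ • x)
      rw [hceq, show (0 : EReal) = ((0:ℝ) : EReal) by simp] at this
      exact_mod_cast this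
    calc Φ (ρ⁻¹ • x) ≤ (a : EReal) * Φ (ρ₀⁻¹ • x) := key
      _ = ((a * c : ℝ) : EReal) := by rw [hceq, EReal.coe_mul]
      _ ≤ ((1 : ℝ) : EReal) := by
          exact_mod_cast mul_le_one₀ hale hc0 hc1
      _ = 1 := by simp
  -- Step B : Φ (t⁻¹ • x) ≤ 1 via lower semicontinuity
  have hB : Φ (t⁻¹ • x) ≤ 1 := by
    by_contra h
    push_neg at h
    have hev := hlsc (t⁻¹ • x) 1 h
    have htend : Tendsto (fun ρ : ℝ => ρ⁻¹ • x) (𝓝[>] t) (𝓝 (t⁻¹ • x)) := by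
      apply Tendsto.mono_left _ nhdsWithin_le_nhds
      exact ((continuousAt_inv₀ htpos.ne').tendsto).smul_const x
    have hev2 : ∀ᶠ ρ : ℝ in 𝓝[>] t, (1 : EReal) < Φ (ρ⁻¹ • x) := htend.eventually hev
    have hev3 : ∀ᶠ ρ : ℝ in 𝓝[>] t, t < ρ := self_mem_nhdsWithin
    obtain ⟨ρ, h1, h2⟩ := (hev2.and hev3).exists
    exact absurd (hA ρ h2) (not_le.mpr h1)
  -- Step C : cosh bound
  have homega : ω (t⁻¹ • x) = ω x / t := by
    rw [map_smul, smul_eq_mul, div_eq_inv_mul]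
  have hreal : Real.cosh (ω x / t) * Real.exp (-S) - 1 ≤ 1 := by
    have := (hbound (t⁻¹ • x)).trans hB
    rw [homega, show (1 : EReal) = ((1:ℝ) : EReal) by simp] at this
    exact_mod_cast this
  have hcosh : Real.cosh (ω x / t) ≤ 2 * Real.exp S := by
    have he : Real.exp (-S) * Real.exp S = 1 := by
      rw [← Real.exp_add]; simp
    have hepos := Real.exp_pos S
    nlinarith [Real.exp_pos (-S)]
  refine ⟨hcosh, ?_⟩
  -- Step D
  have habs : Real.cosh (|ω x| / t) ≤ 2 * Real.exp S := by
    rw [show |ω x| / t = |ω x / t| by rw [abs_div, abs_of_pos htpos], Real.cosh_abs]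
    exact hcosh
  have := le_arcosh_of_cosh_le (div_nonneg (abs_nonneg _) htpos.le) habs
  calc |ω x| = t * (|ω x| / t) := by field_simp
    _ ≤ t * Real.arcoshLog (2 * Real.exp S) := by
        exact mul_le_mul_of_nonneg_left this htpos.le
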